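/- Let K ≥ 1 and let X, Y_1, …, Y_K be independent real-valued random variables, where X is exponentially distributed with rate a > 0 and each Y_i is exponentially distributed with rate b_i > 0, the rates b_1, …, b_K being pairwise distinct. Then for every r ≥ 0, ℙ[X / (Y_1 + ⋯ + Y_K) ≤ r] = Σ_{i=1}^{K} A_i · (a r) / (a r + b_i) = 1 − ∏_{i=1}^{K} b_i / (b_i + a r), where A_i = ∏_{l ≠ i} b_l / (b_l − b_i). -/

import Mathlib

open MeasureTheory ProbabilityTheory Finset Real Set

section Alg
open Polynomial

lemma lag_eval {K : ℕ} (b : Fin K → ℝ) (hdist : Function.Injective b) (hK : 1 ≤ K) (x : ℝ) :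
    ∑ i : Fin K, ∏ l ∈ Finset.univ.erase i, (x + b l) / (b l - b i) = 1 := by
  have hv : Set.InjOn (fun i => -b i) (Finset.univ : Finset (Fin K)) := by
    intro i _ j _ h
    exact hdist (by simpa using neg_injective h)
  have hne : (Finset.univ : Finset (Fin K)).Nonempty := by
    rw [Finset.univ_nonempty_iff]
    exact Fin.pos_iff_nonempty.mp hK
  have h := Lagrange.sum_basis hv hne
  have := congrArg (Polynomial.eval x) h
  rw [Polynomial.eval_finset_sum, Polynomial.eval_one] at this
  rw [← this]
  refine Finset.sum_congr rfl fun i _ => ?_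
  rw [Lagrange.basis, Polynomial.eval_prod]
  refine Finset.prod_congr rfl fun l hl => ?_
  rw [Lagrange.basisDivisor]
  simp only [Polynomial.eval_mul, Polynomial.eval_C, Polynomial.eval_sub, Polynomial.eval_X]
  rw [div_eq_inv_mul]
  ring_nf

lemma sum_A {K : ℕ} (b : Fin K → ℝ) (hdist : Function.Injective b) (hK : 1 ≤ K) :
    ∑ i : Fin K, ∏ l ∈ Finset.univ.erase i, b l / (b l - b i) = 1 := by
  have := lag_eval b hdist hK 0
  simpa using this

lemma sum_Ab {K : ℕ} (b : Fin K → ℝ) (hpos : ∀ i, 0 < b i)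
    (hdist : Function.Injective b) (hK : 1 ≤ K) {x : ℝ} (hx : 0 ≤ x) :
    ∑ i : Fin K, (∏ l ∈ Finset.univ.erase i, b l / (b l - b i)) * (b i / (b i + x)) =
      ∏ i : Fin K, b i / (b i + x) := by
  have key := lag_eval b hdist hK x
  have h1 : ∀ i : Fin K,
      (∏ l ∈ Finset.univ.erase i, (x + b l) / (b l - b i)) * ∏ l : Fin K, b l / (b l + x)
      = (∏ l ∈ Finset.univ.erase i, b l / (b l - b i)) * (b i / (b i + x)) := by
    intro i
    rw [← Finset.mul_prod_erase _ _ (Finset.mem_univ i), ← mul_assoc, mul_comm _ (b i / (b i + x)),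
      mul_assoc, ← Finset.prod_mul_distrib, mul_comm]
    congr 1
    refine Finset.prod_congr rfl fun l _ => ?_
    have hbl : b l + x ≠ 0 := by have := hpos l; positivity
    rw [add_comm x (b l), div_mul_div_comm, mul_comm (b l + x) (b l),
      mul_div_mul_right _ _ hbl]
  calc ∑ i : Fin K, (∏ l ∈ Finset.univ.erase i, b l / (b l - b i)) * (b i / (b i + x))
      = ∑ i : Fin K, (∏ l ∈ Finset.univ.erase i, (x + b l) / (b l - b i))
          * ∏ l : Fin K, b l / (b l + x) := by
        exact (Finset.sum_congr rfl fun i _ => (h1 i)).symm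
    _ = (∑ i : Fin K, ∏ l ∈ Finset.univ.erase i, (x + b l) / (b l - b i))
          * ∏ l : Fin K, b l / (b l + x) := by rw [Finset.sum_mul]
    _ = ∏ l : Fin K, b l / (b l + x) := by rw [key, one_mul]

lemma part2 {K : ℕ} (b : Fin K → ℝ) (hpos : ∀ i, 0 < b i)
    (hdist : Function.Injective b) (hK : 1 ≤ K) {x : ℝ} (hx : 0 ≤ x) :
    ∑ i : Fin K, (∏ l ∈ Finset.univ.erase i, b l / (b l - b i)) * x / (x + b i) =
      1 - ∏ i : Fin K, b i / (b i + x) := by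
  have h : ∀ i : Fin K,
      (∏ l ∈ Finset.univ.erase i, b l / (b l - b i)) * x / (x + b i)
      = (∏ l ∈ Finset.univ.erase i, b l / (b l - b i))
        - (∏ l ∈ Finset.univ.erase i, b l / (b l - b i)) * (b i / (b i + x)) := by
    intro i
    have hxb : x + b i ≠ 0 := by have := hpos i; positivity
    have hbx : b i + x ≠ 0 := by have := hpos i; positivity
    rw [mul_div_assoc]
    have hx1 : x / (x + b i) = 1 - b i / (b i + x) := by
      rw [eq_sub_iff_add_eq, div_add_div _ _ hxb hbx]
      rw [div_eq_one_iff_eq (by rw [add_comm x (b i)]; exact mul_ne_zero hbx hbx)]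
      ring
    rw [hx1, mul_sub, mul_one]
  rw [Finset.sum_congr rfl fun i _ => h i, Finset.sum_sub_distrib,
    sum_A b hdist hK, sum_Ab b hpos hdist hK hx]

end Alg


lemma expMeasure_eq_withDensity (c : ℝ) :
    expMeasure c = MeasureTheory.volume.withDensity (exponentialPDF c) := rfl

lemma expMeasure_Iic {c : ℝ} (hc : 0 < c) (x : ℝ) :
    expMeasure c (Set.Iic x) = ENNReal.ofReal (if 0 ≤ x then 1 - exp (-(c * x)) else 0) := by
  rw [expMeasure_eq_withDensity, withDensity_apply _ measurableSet_Iic,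
    lintegral_exponentialPDF_eq_antiDeriv hc]

lemma integral_exp_expMeasure {c t : ℝ} (hc : 0 < c) (ht : t ≤ 0) :
    ∫ x, exp (t * x) ∂(expMeasure c) = c / (c - t) := by
  have hd : 0 < c - t := by linarith
  have hmeas : Measurable fun x : ℝ => ENNReal.ofReal (exp (t * x)) :=
    (measurable_const.mul measurable_id').exp.ennreal_ofReal
  rw [integral_eq_lintegral_of_nonneg_ae (Filter.Eventually.of_forall fun x => (exp_pos _).le)
    ((by fun_prop : Measurable fun x : ℝ => exp (t * x)).aestronglyMeasurable)]
  have hpdf : Measurable (exponentialPDF c) := (measurable_exponentialPDFReal c).ennreal_ofReal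
  rw [expMeasure_eq_withDensity, lintegral_withDensity_eq_lintegral_mul _ hpdf hmeas]
  have hpt : ∀ x : ℝ, (exponentialPDF c * fun x => ENNReal.ofReal (exp (t * x))) x
      = Set.indicator (Ici 0) (fun x => ENNReal.ofReal (c * exp (-((c - t) * x)))) x := by
    intro x
    simp only [Pi.mul_apply, exponentialPDF_eq, Set.indicator, Set.mem_Ici]
    split_ifs with h
    · rw [← ENNReal.ofReal_mul (by positivity)]
      congr 1
      rw [mul_assoc, ← exp_add]
      ring_nf
    · simp
  rw [lintegral_congr hpt, lintegral_indicator measurableSet_Ici _,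
    setLIntegral_congr (Filter.EventuallyEq.symm Ioi_ae_eq_Ici)]
  have hint : IntegrableOn (fun x => c * exp (-((c - t) * x))) (Ioi (0:ℝ)) := by
    apply Integrable.const_mul
    have h := exp_neg_integrableOn_Ioi 0 hd
    have he : (fun x : ℝ => exp (-(c - t) * x)) = fun x => exp (-((c - t) * x)) := by
      funext x; ring_nf
    rwa [he] at h
  rw [← MeasureTheory.ofReal_integral_eq_lintegral_ofReal hint
    (Filter.Eventually.of_forall fun x => by positivity)]
  rw [ENNReal.toReal_ofReal (by
    apply integral_nonneg
    intro x; positivity)]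
  rw [MeasureTheory.integral_const_mul]
  rw [show (fun x => exp (-((c-t) * x))) = fun x => (fun y => exp (-y)) ((c-t) * x) from rfl,
    MeasureTheory.integral_comp_mul_left_Ioi (fun y => exp (-y)) 0 hd, mul_zero,
    integral_exp_neg_Ioi, neg_zero, exp_zero, smul_eq_mul, mul_one, div_eq_mul_inv]



lemma mgf_of_map {Ω : Type*} [MeasurableSpace Ω] {μ : Measure Ω} {Z : Ω → ℝ}
    (hZ : Measurable Z) {c t : ℝ} (hc : 0 < c) (ht : t ≤ 0)
    (hd : μ.map Z = expMeasure c) : mgf Z μ t = c / (c - t) := by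
  rw [mgf, ← integral_map hZ.aemeasurable
    ((by fun_prop : Measurable fun x : ℝ => exp (t * x))).aestronglyMeasurable, hd,
    integral_exp_expMeasure hc ht]

/-- Closed-form outage probability in the interference-limited regime (equation (7) of
the paper): if `X ~ Exp(a)` and `Y i ~ Exp(b i)` are independent with pairwise distinct
positive rates, then for every `r ≥ 0`,
`ℙ[X / (Y 1 + ⋯ + Y K) ≤ r] = ∑ i, A i * (a r) / (a r + b i) = 1 - ∏ i, b i / (b i + a r)`,
where `A i = ∏_{l ≠ i} b l / (b l - b i)`. -/
theorem stmt_10 {Ω : Type*} [MeasurableSpace Ω] (μ : Measure Ω) [IsProbabilityMeasure μ]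
    (K : ℕ) (hK : 1 ≤ K) (a : ℝ) (ha : 0 < a) (b : Fin K → ℝ)
    (hpos : ∀ i, 0 < b i) (hdist : Function.Injective b)
    (X : Ω → ℝ) (hXmeas : Measurable X)
    (Y : Fin K → Ω → ℝ) (hYmeas : ∀ i, Measurable (Y i))
    (hindep : iIndepFun (Fin.cons X Y : Fin (K + 1) → Ω → ℝ) μ)
    (hXdist : Measure.map X μ = expMeasure a)
    (hYdist : ∀ i, Measure.map (Y i) μ = expMeasure (b i))
    (r : ℝ) (hr : 0 ≤ r) :
    μ {ω | X ω / (∑ i : Fin K, Y i ω) ≤ r} =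
        ENNReal.ofReal (∑ i : Fin K,
          (∏ l ∈ Finset.univ.erase i, b l / (b l - b i)) * (a * r) / (a * r + b i)) ∧
      ∑ i : Fin K,
          (∏ l ∈ Finset.univ.erase i, b l / (b l - b i)) * (a * r) / (a * r + b i) =
        1 - ∏ i : Fin K, b i / (b i + a * r) := by
  classical
  have hx0 : (0:ℝ) ≤ a * r := by positivity
  have h2 := part2 b hpos hdist hK hx0
  refine ⟨?_, h2⟩
  rw [h2]
  -- setup
  set t : ℝ := -(a * r) with htdef
  have ht : t ≤ 0 := by rw [htdef]; linarith
  haveI : Nonempty (Fin K) := Fin.pos_iff_nonempty.mp hK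
  set f : Fin (K + 1) → Ω → ℝ := (Fin.cons X Y : Fin (K + 1) → Ω → ℝ) with hfdef
  have hfmeas : ∀ i, Measurable (f i) := by
    intro i
    refine Fin.cases ?_ ?_ i
    · simpa [hfdef] using hXmeas
    · intro j; simpa [hfdef] using hYmeas j
  set s : Finset (Fin (K + 1)) := (Finset.univ : Finset (Fin K)).image Fin.succ with hsdef
  have hs0 : (0 : Fin (K + 1)) ∉ s := by
    simp [hsdef, Finset.mem_image, eq_comm, Fin.succ_ne_zero]
  set S : Ω → ℝ := fun ω => ∑ i : Fin K, Y i ω with hSdef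
  have hSmeas : Measurable S := Finset.measurable_sum _ (fun i _ => hYmeas i)
  have hSfun : (∑ j ∈ s, f j) = S := by
    funext ω
    rw [Finset.sum_apply, hsdef,
      Finset.sum_image (fun i _ j _ h => Fin.succ_injective K h)]
    simp [hfdef, hSdef]
  -- independence of S and X
  have hindepXS : IndepFun S X μ := by
    have h := hindep.indepFun_finsetSum_of_notMem hfmeas hs0
    rw [hSfun] at h
    simpa [hfdef] using h
  have hprod : μ.map (fun ω => (S ω, X ω)) = (μ.map S).prod (μ.map X) :=
    (indepFun_iff_map_prod_eq_prod_map_map hSmeas.aemeasurable hXmeas.aemeasurable).mp hindepXS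
  -- positivity a.e.
  have hY0 : ∀ i, ∀ᵐ ω ∂μ, 0 < Y i ω := by
    intro i
    have hm : μ {ω | Y i ω ≤ 0} = 0 := by
      have hset : {ω | Y i ω ≤ 0} = Y i ⁻¹' (Set.Iic 0) := rfl
      rw [hset, ← Measure.map_apply (hYmeas i) measurableSet_Iic, hYdist i,
        expMeasure_Iic (hpos i) 0]
      norm_num
    rw [ae_iff]
    simpa [not_lt] using hm
  have hS0 : ∀ᵐ ω ∂μ, 0 < S ω := by
    have hall : ∀ᵐ ω ∂μ, ∀ i, 0 < Y i ω := ae_all_iff.mpr hY0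
    filter_upwards [hall] with ω hω
    exact Finset.sum_pos (fun i _ => hω i) Finset.univ_nonempty
  have hmapS0 : ∀ᵐ s' ∂(μ.map S), 0 < s' :=
    (ae_map_iff hSmeas.aemeasurable measurableSet_Ioi).mpr hS0
  haveI : IsProbabilityMeasure (μ.map S) := Measure.isProbabilityMeasure_map hSmeas.aemeasurable
  -- event as preimage
  have hT : MeasurableSet {p : ℝ × ℝ | p.2 / p.1 ≤ r} :=
    measurableSet_le (measurable_snd.div measurable_fst) measurable_const
  have hgmeas : Measurable fun s' : ℝ => ENNReal.ofReal (exp (t * s')) :=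
    (measurable_const.mul measurable_id').exp.ennreal_ofReal
  have hbound : (fun s' : ℝ => ENNReal.ofReal (exp (t * s'))) ≤ᵐ[μ.map S] fun _ => 1 := by
    filter_upwards [hmapS0] with s' hs'
    exact ENNReal.ofReal_le_one.mpr (exp_le_one_iff.mpr (mul_nonpos_iff.mpr
      (Or.inr ⟨ht, hs'.le⟩)))
  have hfin : ∫⁻ s', ENNReal.ofReal (exp (t * s')) ∂(μ.map S) ≠ ⊤ := by
    refine ne_of_lt (lt_of_le_of_lt (lintegral_mono_ae hbound) ?_)
    simp
  have hint : Integrable (fun ω => exp (t * S ω)) μ := by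
    refine ⟨((hSmeas.const_mul t).exp).aestronglyMeasurable, ?_⟩
    refine HasFiniteIntegral.of_bounded (C := 1) ?_
    filter_upwards [hS0] with ω hω
    rw [Real.norm_eq_abs, Real.abs_exp]
    exact exp_le_one_iff.mpr (mul_nonpos_iff.mpr (Or.inr ⟨ht, hω.le⟩))
  have hmgf : mgf S μ t = ∏ i : Fin K, b i / (b i + a * r) := by
    have h := hindep.mgf_sum (t := t) hfmeas s
    rw [hSfun] at h
    rw [h, hsdef, Finset.prod_image (fun i _ j _ hij => Fin.succ_injective K hij)]
    refine Finset.prod_congr rfl fun i _ => ?_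
    have : f i.succ = Y i := by simp [hfdef]
    rw [this, mgf_of_map (hYmeas i) (hpos i) ht (hYdist i), htdef, sub_neg_eq_add]
  have hP0 : (0:ℝ) ≤ ∏ i : Fin K, b i / (b i + a * r) :=
    Finset.prod_nonneg fun i _ => div_nonneg (hpos i).le (by have := hpos i; positivity)
  calc μ {ω | X ω / (∑ i : Fin K, Y i ω) ≤ r}
      = μ ((fun ω => (S ω, X ω)) ⁻¹' {p : ℝ × ℝ | p.2 / p.1 ≤ r}) := rfl
    _ = (μ.map (fun ω => (S ω, X ω))) {p : ℝ × ℝ | p.2 / p.1 ≤ r} :=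
        (Measure.map_apply (hSmeas.prodMk hXmeas) hT).symm
    _ = ((μ.map S).prod (μ.map X)) {p : ℝ × ℝ | p.2 / p.1 ≤ r} := by rw [hprod]
    _ = ∫⁻ s', (μ.map X) (Prod.mk s' ⁻¹' {p : ℝ × ℝ | p.2 / p.1 ≤ r}) ∂(μ.map S) :=
        Measure.prod_apply hT
    _ = ∫⁻ s', ((1 : ENNReal) - ENNReal.ofReal (exp (t * s'))) ∂(μ.map S) := by
        refine lintegral_congr_ae ?_
        filter_upwards [hmapS0] with s' hs'
        have hpre : Prod.mk s' ⁻¹' {p : ℝ × ℝ | p.2 / p.1 ≤ r} = Set.Iic (r * s') := by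
          ext u
          simp only [Set.mem_preimage, Set.mem_setOf_eq, Set.mem_Iic]
          rw [div_le_iff₀ hs']
        rw [hpre, hXdist, expMeasure_Iic ha, if_pos (by positivity),
          ENNReal.ofReal_sub _ (exp_pos _).le, ENNReal.ofReal_one]
        congr 2
        rw [htdef]; ring
    _ = 1 - ∫⁻ s', ENNReal.ofReal (exp (t * s')) ∂(μ.map S) := by
        rw [lintegral_sub hgmeas hfin hbound, lintegral_one, measure_univ]
    _ = 1 - ENNReal.ofReal (mgf S μ t) := by
        rw [lintegral_map hgmeas hSmeas,
          ← MeasureTheory.ofReal_integral_eq_lintegral_ofReal hint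
            (Filter.Eventually.of_forall fun ω => (exp_pos _).le)]
        rfl
    _ = 1 - ENNReal.ofReal (∏ i : Fin K, b i / (b i + a * r)) := by rw [hmgf]
    _ = ENNReal.ofReal (1 - ∏ i : Fin K, b i / (b i + a * r)) := by
        rw [ENNReal.ofReal_sub 1 hP0, ENNReal.ofReal_one]
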